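/- arXiv:0812.0569 — 4 statements merged into one kernel-verified Lean document; each statement's English description precedes it below -/
import Mathlib

section
/- For all integers 1 ≤ a ≤ b ≤ n, the expected number of indices in cycles of length between a and b satisfies E_n(N_{a,b}) = ∑_{j=a}^{b} e^{−α_j} h_{n−j}/h_n. -/
open Finset Filter

/-- Length of the cycle of `π` containing `i` (1 for fixed points). -/
noncomputable def cycleLen {n : ℕ} (π : Equiv.Perm (Fin n)) (i : Fin n) : ℕ :=
  Function.minimalPeriod π i

/-- `numCycles π ℓ` = number of cycles of `π` of length `ℓ` (counting fixed points as 1-cycles). -/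
noncomputable def numCycles {n : ℕ} (π : Equiv.Perm (Fin n)) (ℓ : ℕ) : ℕ :=
  (Finset.univ.filter fun i => cycleLen π i = ℓ).card / ℓ

/-- The total cycle weight `∑_ℓ α_ℓ r_ℓ(π)`. -/
noncomputable def cycleWeight (α : ℕ → ℝ) {n : ℕ} (π : Equiv.Perm (Fin n)) : ℝ :=
  ∑ ℓ ∈ Finset.Icc 1 n, α ℓ * (numCycles π ℓ : ℝ)

/-- The normalization `h_n = (1/n!) ∑_{π ∈ S_n} exp(-∑_ℓ α_ℓ r_ℓ(π))`; `h_0 = 1`. -/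
noncomputable def hseq (α : ℕ → ℝ) (n : ℕ) : ℝ :=
  (1 / (n.factorial : ℝ)) * ∑ π : Equiv.Perm (Fin n), Real.exp (-(cycleWeight α π))

/-- `N_{a,b}(π) = ∑_{ℓ=a}^b ℓ r_ℓ(π)`, the number of indices in cycles of length between `a` and `b`. -/
noncomputable def Nab {n : ℕ} (a b : ℕ) (π : Equiv.Perm (Fin n)) : ℕ :=
  ∑ ℓ ∈ Finset.Icc a b, ℓ * numCycles π ℓ

/-- Expectation under `p_n(π) = exp(-∑_ℓ α_ℓ r_ℓ(π)) / (h_n n!)`. -/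
noncomputable def En (α : ℕ → ℝ) (n : ℕ) (f : Equiv.Perm (Fin n) → ℝ) : ℝ :=
  (∑ π : Equiv.Perm (Fin n), f π * Real.exp (-(cycleWeight α π))) / (hseq α n * (n.factorial : ℝ))


section Aux
set_option linter.unusedVariables false
set_option linter.unusedSectionVars false
open Function Equiv

lemma mp_congr {β γ : Type*} {f : β → β} {g : γ → γ} {x : β} {y : γ}
    (h : ∀ k, f^[k] x = x ↔ g^[k] y = y) :
    Function.minimalPeriod f x = Function.minimalPeriod g y := by
  have hpt : ∀ k, IsPeriodicPt f k x ↔ IsPeriodicPt g k y := h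
  by_cases hx : x ∈ periodicPts f
  · have hy : y ∈ periodicPts g := by
      obtain ⟨k, hk, hkx⟩ := hx
      exact ⟨k, hk, (hpt k).1 hkx⟩
    exact le_antisymm
      ((hpt _).2 (isPeriodicPt_minimalPeriod g y) |>.minimalPeriod_le
        (minimalPeriod_pos_of_mem_periodicPts hy))
      ((hpt _).1 (isPeriodicPt_minimalPeriod f x) |>.minimalPeriod_le
        (minimalPeriod_pos_of_mem_periodicPts hx))
  · have hy : y ∉ periodicPts g := by
      intro ⟨k, hk, hky⟩
      exact hx ⟨k, hk, (hpt k).2 hky⟩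
    rw [minimalPeriod_eq_zero_of_notMem_periodicPts hx,
        minimalPeriod_eq_zero_of_notMem_periodicPts hy]

section general
variable {β : Type*} [Fintype β] [DecidableEq β] (π : Equiv.Perm β)

lemma perm_iterate (k : ℕ) (x : β) : (⇑π)^[k] x = (π ^ k) x := by
  rw [← Equiv.Perm.iterate_eq_pow]

lemma perm_mem_periodicPts (x : β) : x ∈ periodicPts ⇑π :=
  ⟨orderOf π, orderOf_pos π, by
    simp [IsPeriodicPt, IsFixedPt, perm_iterate, pow_orderOf_eq_one]⟩

lemma mp_pos (x : β) : 0 < Function.minimalPeriod ⇑π x :=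
  Function.minimalPeriod_pos_of_mem_periodicPts (perm_mem_periodicPts π x)

/-- the orbit of `x` under `π` as a finset -/
noncomputable def orb (x : β) : Finset β :=
  (Finset.range (Function.minimalPeriod ⇑π x)).image (fun k => (⇑π)^[k] x)

lemma mem_orb {x y : β} : y ∈ orb π x ↔ ∃ k < Function.minimalPeriod ⇑π x, (⇑π)^[k] x = y := by
  simp [orb]

lemma card_orb (x : β) : (orb π x).card = Function.minimalPeriod ⇑π x := by
  rw [orb, Finset.card_image_of_injOn, Finset.card_range]
  intro a ha b hb hab
  exact iterate_injOn_Iio_minimalPeriod (by simpa using ha) (by simpa using hb) hab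

lemma self_mem_orb (x : β) : x ∈ orb π x :=
  (mem_orb π).2 ⟨0, mp_pos π x, rfl⟩

lemma mp_of_mem_orb {x y : β} (h : y ∈ orb π x) :
    Function.minimalPeriod ⇑π y = Function.minimalPeriod ⇑π x := by
  obtain ⟨k, -, rfl⟩ := (mem_orb π).1 h
  exact minimalPeriod_apply_iterate (perm_mem_periodicPts π x) k

lemma orb_subset_of_mem {x y : β} (h : y ∈ orb π x) : orb π y ⊆ orb π x := by
  obtain ⟨k, hk, rfl⟩ := (mem_orb π).1 h
  intro z hz
  obtain ⟨l, hl, rfl⟩ := (mem_orb π).1 hz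
  rw [← Function.iterate_add_apply]
  refine (mem_orb π).2 ⟨(l + k) % Function.minimalPeriod ⇑π x,
    Nat.mod_lt _ (mp_pos π x), ?_⟩
  rw [iterate_mod_minimalPeriod_eq]

lemma mem_orb_symm {x y : β} (h : y ∈ orb π x) : x ∈ orb π y := by
  obtain ⟨k, hk, rfl⟩ := (mem_orb π).1 h
  rcases Nat.eq_zero_or_pos k with rfl | hkpos
  · exact self_mem_orb π x
  refine (mem_orb π).2 ⟨Function.minimalPeriod ⇑π x - k, ?_, ?_⟩
  · rw [minimalPeriod_apply_iterate (perm_mem_periodicPts π x)]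
    omega
  · rw [← Function.iterate_add_apply]
    have : Function.minimalPeriod ⇑π x - k + k = Function.minimalPeriod ⇑π x := by omega
    rw [this]
    exact isPeriodicPt_minimalPeriod ⇑π x

lemma orb_eq_of_mem {x y : β} (h : y ∈ orb π x) : orb π y = orb π x :=
  le_antisymm (orb_subset_of_mem π h) (orb_subset_of_mem π (mem_orb_symm π h))

lemma dvd_card_filter_mp (j : ℕ) :
    j ∣ (Finset.univ.filter fun i => Function.minimalPeriod ⇑π i = j).card := by
  set S := Finset.univ.filter fun i => Function.minimalPeriod ⇑π i = j with hS
  have hfib : ∀ s ∈ S.image (orb π), (S.filter fun i => orb π i = s).card = j := by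
    intro s hs
    obtain ⟨x₀, hx₀, rfl⟩ := Finset.mem_image.1 hs
    have hx₀j : Function.minimalPeriod ⇑π x₀ = j := by simpa [hS] using hx₀
    have : (S.filter fun i => orb π i = orb π x₀) = orb π x₀ := by
      ext y
      simp only [Finset.mem_filter, hS, Finset.mem_univ, true_and]
      constructor
      · rintro ⟨-, h⟩; rw [← h]; exact self_mem_orb π y
      · intro hy
        exact ⟨by rw [mp_of_mem_orb π hy, hx₀j], orb_eq_of_mem π hy⟩
    rw [this, card_orb, hx₀j]
  rw [Finset.card_eq_sum_card_fiberwise (fun x hx => Finset.mem_image_of_mem (orb π) hx),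
    Finset.sum_congr rfl hfib, Finset.sum_const, smul_eq_mul]
  exact dvd_mul_left j _

end general

section general2
variable {β : Type*} [Fintype β] [DecidableEq β] (π : Equiv.Perm β)

lemma mp_le_card (x : β) : Function.minimalPeriod ⇑π x ≤ Fintype.card β := by
  rw [← card_orb π x]
  exact Finset.card_le_univ _

/-- number of cycles of length ℓ, generalized -/
noncomputable def nc (π : Equiv.Perm β) (ℓ : ℕ) : ℕ :=
  (Finset.univ.filter fun i => Function.minimalPeriod ⇑π i = ℓ).card / ℓ

lemma mul_nc (ℓ : ℕ) :
    ℓ * nc π ℓ = (Finset.univ.filter fun i => Function.minimalPeriod ⇑π i = ℓ).card :=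
  Nat.mul_div_cancel' (dvd_card_filter_mp π ℓ)

lemma nc_eq_zero {ℓ : ℕ} (h : Fintype.card β < ℓ) : nc π ℓ = 0 := by
  have : (Finset.univ.filter fun i => Function.minimalPeriod ⇑π i = ℓ) = ∅ := by
    ext x
    simp only [Finset.mem_filter, Finset.mem_univ, true_and, Finset.notMem_empty, iff_false]
    intro hx
    exact absurd (hx ▸ mp_le_card π x) (by omega)
  simp [nc, this]

/-- generalized cycle weight -/
noncomputable def cw (α : ℕ → ℝ) (π : Equiv.Perm β) : ℝ :=
  ∑ ℓ ∈ Finset.Icc 1 (Fintype.card β), α ℓ * (nc π ℓ : ℝ)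

variable {γ : Type*} [Fintype γ] [DecidableEq γ]

lemma permCongr_iterate (e : β ≃ γ) (p : Equiv.Perm β) (k : ℕ) (x : β) :
    (⇑(e.permCongr p))^[k] (e x) = e ((⇑p)^[k] x) := by
  induction k with
  | zero => rfl
  | succ k ih => rw [Function.iterate_succ_apply', ih, Function.iterate_succ_apply']; simp

lemma mp_permCongr (e : β ≃ γ) (p : Equiv.Perm β) (x : β) :
    Function.minimalPeriod ⇑(e.permCongr p) (e x) = Function.minimalPeriod ⇑p x :=
  mp_congr fun k => by rw [permCongr_iterate]; exact ⟨fun h => e.injective h, fun h => by rw [h]⟩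

lemma nc_permCongr (e : β ≃ γ) (p : Equiv.Perm β) (ℓ : ℕ) :
    nc (e.permCongr p) ℓ = nc p ℓ := by
  unfold nc
  congr 1
  apply Finset.card_bij (fun x _ => e.symm x)
  · intro x hx
    simp only [Finset.mem_filter, Finset.mem_univ, true_and] at hx ⊢
    rw [← hx, ← mp_permCongr e p (e.symm x), e.apply_symm_apply]
  · intro x _ y _ h
    exact e.symm.injective h
  · intro y hy
    refine ⟨e y, ?_, by simp⟩
    simp only [Finset.mem_filter, Finset.mem_univ, true_and] at hy ⊢
    rw [mp_permCongr, hy]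

lemma cw_permCongr (α : ℕ → ℝ) (e : β ≃ γ) (p : Equiv.Perm β) :
    cw α (e.permCongr p) = cw α p := by
  unfold cw
  rw [Fintype.card_congr e.symm]
  exact Finset.sum_congr rfl fun ℓ _ => by rw [nc_permCongr]

end general2

section sumRot
open Fin.NatCast
variable {β γ : Type*} [Fintype β] [DecidableEq β] [Fintype γ] [DecidableEq γ]

lemma sumCongr_iterate_inl (p : Equiv.Perm β) (q : Equiv.Perm γ) (k : ℕ) (x : β) :
    (⇑(Equiv.sumCongr p q))^[k] (Sum.inl x) = Sum.inl ((⇑p)^[k] x) := by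
  induction k with
  | zero => rfl
  | succ k ih => rw [Function.iterate_succ_apply', ih, Function.iterate_succ_apply']; simp

lemma sumCongr_iterate_inr (p : Equiv.Perm β) (q : Equiv.Perm γ) (k : ℕ) (x : γ) :
    (⇑(Equiv.sumCongr p q))^[k] (Sum.inr x) = Sum.inr ((⇑q)^[k] x) := by
  induction k with
  | zero => rfl
  | succ k ih => rw [Function.iterate_succ_apply', ih, Function.iterate_succ_apply']; simp

lemma mp_sumCongr_inl (p : Equiv.Perm β) (q : Equiv.Perm γ) (x : β) :
    Function.minimalPeriod ⇑(Equiv.sumCongr p q) (Sum.inl x) = Function.minimalPeriod ⇑p x :=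
  mp_congr fun k => by
    rw [sumCongr_iterate_inl]
    exact ⟨fun h => Sum.inl.inj h, fun h => by rw [h]⟩

lemma mp_sumCongr_inr (p : Equiv.Perm β) (q : Equiv.Perm γ) (x : γ) :
    Function.minimalPeriod ⇑(Equiv.sumCongr p q) (Sum.inr x) = Function.minimalPeriod ⇑q x :=
  mp_congr fun k => by
    rw [sumCongr_iterate_inr]
    exact ⟨fun h => Sum.inr.inj h, fun h => by rw [h]⟩

lemma finRotate_iterate (j : ℕ) (k : ℕ) (x : Fin (j + 1)) :
    (⇑(finRotate (j + 1)))^[k] x = x + (k : Fin (j + 1)) := by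
  induction k with
  | zero => simp
  | succ k ih =>
      rw [Function.iterate_succ_apply', ih, finRotate_succ_apply]
      push_cast
      rw [add_assoc]

lemma mp_finRotate (j : ℕ) (hj : 1 ≤ j) (x : Fin j) :
    Function.minimalPeriod ⇑(finRotate j) x = j := by
  obtain ⟨m, rfl⟩ : ∃ m, j = m + 1 := ⟨j - 1, by omega⟩
  haveI : NeZero (m + 1) := ⟨by omega⟩
  have hper : ∀ k : ℕ, IsPeriodicPt ⇑(finRotate (m + 1)) k x ↔ (m + 1) ∣ k := by
    intro k
    unfold IsPeriodicPt IsFixedPt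
    rw [finRotate_iterate]
    constructor
    · intro h
      have h0 : ((k : ℕ) : Fin (m + 1)) = 0 := by
        have := congrArg (fun z => z - x) h
        simpa using this
      simpa using h0
    · intro h
      have h0 : ((k : ℕ) : Fin (m + 1)) = 0 := by
        simpa using h
      rw [h0, add_zero]
  refine le_antisymm
    (IsPeriodicPt.minimalPeriod_le (by omega) ((hper (m + 1)).2 dvd_rfl))
    (Nat.le_of_dvd (mp_pos _ x) ((hper _).1 (isPeriodicPt_minimalPeriod _ x)))

end sumRot

lemma nc_eq_numCycles {n : ℕ} (π : Equiv.Perm (Fin n)) (ℓ : ℕ) : nc π ℓ = numCycles π ℓ := rfl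

lemma cw_eq_cycleWeight (α : ℕ → ℝ) {n : ℕ} (π : Equiv.Perm (Fin n)) :
    cw α π = cycleWeight α π := by
  unfold cw cycleWeight
  rw [Fintype.card_fin]
  rfl

lemma sum_exp_cw (α : ℕ → ℝ) {β : Type*} [Fintype β] [DecidableEq β] :
    ∑ σ : Equiv.Perm β, Real.exp (-(cw α σ)) =
      (Fintype.card β).factorial * hseq α (Fintype.card β) := by
  classical
  have e : β ≃ Fin (Fintype.card β) := Fintype.equivFin β
  have h1 : ∑ σ : Equiv.Perm β, Real.exp (-(cw α σ)) =
      ∑ τ : Equiv.Perm (Fin (Fintype.card β)), Real.exp (-(cw α τ)) := by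
    refine Fintype.sum_equiv e.permCongr _ _ fun σ => ?_
    rw [cw_permCongr]
  rw [h1, hseq]
  have h2 : ∀ τ : Equiv.Perm (Fin (Fintype.card β)), cw α τ = cycleWeight α τ :=
    fun τ => cw_eq_cycleWeight α τ
  rw [Finset.sum_congr rfl fun τ _ => by rw [h2]]
  field_simp

lemma hseq_pos (α : ℕ → ℝ) (n : ℕ) : 0 < hseq α n := by
  unfold hseq
  apply mul_pos (by positivity)
  exact Finset.sum_pos (fun π _ => Real.exp_pos _) ⟨1, Finset.mem_univ 1⟩

section main
variable {n j : ℕ}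

noncomputable def embE (g : Fin j ↪ Fin n) :
    (Fin j ⊕ {x : Fin n // x ∉ Set.range ⇑g}) ≃ Fin n :=
  ((Equiv.ofInjective g g.injective).sumCongr (Equiv.refl _)).trans
    (Equiv.Set.sumCompl (Set.range ⇑g))

lemma embE_inl (g : Fin j ↪ Fin n) (k : Fin j) : embE g (Sum.inl k) = g k := by
  simp [embE]
  exact Equiv.Set.sumCompl_apply_inl _ _

lemma embE_inr (g : Fin j ↪ Fin n) (x : {x : Fin n // x ∉ Set.range ⇑g}) :
    embE g (Sum.inr x) = ↑x := by
  simp [embE]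
  rfl

noncomputable def Phi (g : Fin j ↪ Fin n) (σ : Equiv.Perm {x : Fin n // x ∉ Set.range ⇑g}) :
    Equiv.Perm (Fin n) :=
  (embE g).permCongr (Equiv.sumCongr (finRotate j) σ)

lemma Phi_iterate_g (g : Fin j ↪ Fin n) (σ : Equiv.Perm {x : Fin n // x ∉ Set.range ⇑g})
    (k : ℕ) (m : Fin j) :
    (⇑(Phi g σ))^[k] (g m) = g ((⇑(finRotate j))^[k] m) := by
  rw [← embE_inl g m, Phi, permCongr_iterate, sumCongr_iterate_inl, embE_inl]

lemma Phi_apply_out' (g : Fin j ↪ Fin n) (σ : Equiv.Perm {x : Fin n // x ∉ Set.range ⇑g})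
    (y : {x : Fin n // x ∉ Set.range ⇑g}) :
    Phi g σ ↑y = ↑(σ y) := by
  rw [← embE_inr g y, Phi]
  rw [Equiv.permCongr_apply, Equiv.symm_apply_apply, Equiv.sumCongr_apply]
  exact embE_inr g _

lemma Phi_apply_out (g : Fin j ↪ Fin n) (σ : Equiv.Perm {x : Fin n // x ∉ Set.range ⇑g})
    {x : Fin n} (hx : x ∉ Set.range ⇑g) :
    Phi g σ x = ↑(σ ⟨x, hx⟩) :=
  Phi_apply_out' g σ ⟨x, hx⟩

lemma mp_Phi_g (hj : 1 ≤ j) (g : Fin j ↪ Fin n)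
    (σ : Equiv.Perm {x : Fin n // x ∉ Set.range ⇑g}) (m : Fin j) :
    Function.minimalPeriod ⇑(Phi g σ) (g m) = j := by
  rw [← embE_inl g m, Phi, mp_permCongr, mp_sumCongr_inl, mp_finRotate j hj]

lemma mp_Phi_out' (g : Fin j ↪ Fin n) (σ : Equiv.Perm {x : Fin n // x ∉ Set.range ⇑g})
    (y : {x : Fin n // x ∉ Set.range ⇑g}) :
    Function.minimalPeriod ⇑(Phi g σ) ↑y = Function.minimalPeriod ⇑σ y := by
  rw [← embE_inr g y, Phi, mp_permCongr, mp_sumCongr_inr]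

lemma mp_Phi_out (g : Fin j ↪ Fin n) (σ : Equiv.Perm {x : Fin n // x ∉ Set.range ⇑g})
    {x : Fin n} (hx : x ∉ Set.range ⇑g) :
    Function.minimalPeriod ⇑(Phi g σ) x = Function.minimalPeriod ⇑σ ⟨x, hx⟩ :=
  mp_Phi_out' g σ ⟨x, hx⟩

end main

section main2
variable {n j : ℕ}

lemma card_filter_mp_Phi (hj : 1 ≤ j) (g : Fin j ↪ Fin n)
    (σ : Equiv.Perm {x : Fin n // x ∉ Set.range ⇑g}) (ℓ : ℕ) :
    (Finset.univ.filter fun i : Fin n => Function.minimalPeriod ⇑(Phi g σ) i = ℓ).card =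
      (if ℓ = j then j else 0) +
        (Finset.univ.filter fun y : {x : Fin n // x ∉ Set.range ⇑g} =>
          Function.minimalPeriod ⇑σ y = ℓ).card := by
  classical
  rw [← Fintype.card_subtype, ← Fintype.card_subtype]
  have e1 : {i : Fin n // Function.minimalPeriod ⇑(Phi g σ) i = ℓ} ≃
      {z : Fin j ⊕ {x : Fin n // x ∉ Set.range ⇑g} //
        Function.minimalPeriod ⇑(Phi g σ) (embE g z) = ℓ} :=
    ((embE g).subtypeEquiv (fun z => by rfl)).symm
  have e2 : {z : Fin j ⊕ {x : Fin n // x ∉ Set.range ⇑g} //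
        Function.minimalPeriod ⇑(Phi g σ) (embE g z) = ℓ} ≃
      {k : Fin j // Function.minimalPeriod ⇑(Phi g σ) (embE g (Sum.inl k)) = ℓ} ⊕
      {y : {x : Fin n // x ∉ Set.range ⇑g} //
        Function.minimalPeriod ⇑(Phi g σ) (embE g (Sum.inr y)) = ℓ} :=
    Equiv.subtypeSum
  have e3 : {k : Fin j // Function.minimalPeriod ⇑(Phi g σ) (embE g (Sum.inl k)) = ℓ} ≃
      {k : Fin j // j = ℓ} :=
    Equiv.subtypeEquivRight fun k => by rw [embE_inl, mp_Phi_g hj]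
  have e4 : {y : {x : Fin n // x ∉ Set.range ⇑g} //
        Function.minimalPeriod ⇑(Phi g σ) (embE g (Sum.inr y)) = ℓ} ≃
      {y : {x : Fin n // x ∉ Set.range ⇑g} // Function.minimalPeriod ⇑σ y = ℓ} :=
    Equiv.subtypeEquivRight fun y => by rw [embE_inr, mp_Phi_out']
  rw [Fintype.card_congr (e1.trans (e2.trans (Equiv.sumCongr e3 e4))), Fintype.card_sum]
  congr 1
  by_cases h : ℓ = j
  · subst h
    simp [Fintype.card_subtype, Finset.filter_true_of_mem]
  · simp only [if_neg h]
    rw [Fintype.card_eq_zero_iff.2]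
    exact ⟨fun y => h y.2.symm⟩

lemma nc_Phi (hj : 1 ≤ j) (g : Fin j ↪ Fin n)
    (σ : Equiv.Perm {x : Fin n // x ∉ Set.range ⇑g}) (ℓ : ℕ) (hℓ : 1 ≤ ℓ) :
    nc (Phi g σ) ℓ = (if ℓ = j then 1 else 0) + nc σ ℓ := by
  unfold nc
  rw [card_filter_mp_Phi hj]
  by_cases h : ℓ = j
  · subst h
    rw [if_pos rfl, if_pos rfl, add_comm ℓ, Nat.add_div_right _ (by omega), add_comm]
  · rw [if_neg h, if_neg h, zero_add, zero_add]

lemma card_compl_range (hjn : j ≤ n) (g : Fin j ↪ Fin n) :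
    Fintype.card {x : Fin n // x ∉ Set.range ⇑g} = n - j := by
  classical
  rw [Fintype.card_subtype_compl, Fintype.card_fin]
  have : Fintype.card {x : Fin n // x ∈ Set.range ⇑g} = j := by
    rw [Fintype.card_congr (Equiv.ofInjective ⇑g g.injective).symm, Fintype.card_fin]
  rw [this]

end main2

section main3
variable {n j : ℕ}

lemma cw_Phi (α : ℕ → ℝ) (hj : 1 ≤ j) (hjn : j ≤ n) (g : Fin j ↪ Fin n)
    (σ : Equiv.Perm {x : Fin n // x ∉ Set.range ⇑g}) :
    cw α (Phi g σ) = α j + cw α σ := by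
  classical
  unfold cw
  rw [Fintype.card_fin, card_compl_range hjn g]
  have hstep : ∀ ℓ ∈ Finset.Icc 1 n,
      α ℓ * (nc (Phi g σ) ℓ : ℝ) =
        (if ℓ = j then α j else 0) + α ℓ * (nc σ ℓ : ℝ) := by
    intro ℓ hℓ
    rw [nc_Phi hj g σ ℓ (Finset.mem_Icc.1 hℓ).1]
    push_cast
    by_cases h : ℓ = j
    · subst h; simp; ring
    · simp [h]
  rw [Finset.sum_congr rfl hstep, Finset.sum_add_distrib, Finset.sum_ite_eq' (Finset.Icc 1 n) j]
  rw [if_pos (Finset.mem_Icc.2 ⟨hj, hjn⟩)]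
  congr 1
  symm
  apply Finset.sum_subset (Finset.Icc_subset_Icc_right (by omega))
  intro ℓ hℓ hℓ'
  have : n - j < ℓ := by
    simp only [Finset.mem_Icc] at hℓ hℓ'
    omega
  rw [nc_eq_zero σ (by rw [card_compl_range hjn g]; exact this)]
  simp

end main3

section main4
open Fin.NatCast
variable {n j : ℕ}

lemma val_finRotate_iterate (hj : 1 ≤ j) (k : ℕ) (x : Fin j) :
    ((⇑(finRotate j))^[k] x).val = (x.val + k) % j := by
  obtain ⟨m, rfl⟩ : ∃ m, j = m + 1 := ⟨j - 1, by omega⟩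
  rw [finRotate_iterate]
  rw [Fin.val_add, Fin.val_natCast]
  exact (Nat.mod_modEq k (m + 1)).add_left x.val

lemma modstep {k : ℕ} (hj : 1 ≤ j) (hk : k < j) : ((k + j - 1) % j + 1) % j = k := by
  rcases Nat.eq_zero_or_pos k with rfl | hk0
  · have h0 : 0 + j - 1 = j - 1 := by omega
    rw [h0, Nat.mod_eq_of_lt (by omega : j - 1 < j)]
    have h2 : j - 1 + 1 = j := by omega
    rw [h2, Nat.mod_self]
  · have h1 : k + j - 1 = (k - 1) + j := by omega
    have h3 : (k - 1) % j = k - 1 := Nat.mod_eq_of_lt (by omega)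
    rw [h1, Nat.add_mod_right, h3]
    have h2 : k - 1 + 1 = k := by omega
    rw [h2, Nat.mod_eq_of_lt hk]

noncomputable def Phi' (hj : 1 ≤ j) :
    (Σ g : Fin j ↪ Fin n, Equiv.Perm {x : Fin n // x ∉ Set.range ⇑g}) →
      {p : Equiv.Perm (Fin n) × Fin n // Function.minimalPeriod ⇑p.1 p.2 = j} :=
  fun gs => ⟨(Phi gs.1 gs.2, gs.1 ⟨0, hj⟩), mp_Phi_g hj _ _ _⟩

lemma Phi'_bijective (hj : 1 ≤ j) : Function.Bijective (Phi' (n := n) hj) := by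
  classical
  constructor
  · rintro ⟨g₁, σ₁⟩ ⟨g₂, σ₂⟩ h
    simp only [Phi', Subtype.mk.injEq, Prod.mk.injEq] at h
    obtain ⟨hπ, hi⟩ := h
    have hg : g₁ = g₂ := by
      apply DFunLike.ext
      intro k
      have hr : ∀ (g : Fin j ↪ Fin n), (⇑(finRotate j))^[k.val] (⟨0, hj⟩ : Fin j) = k := by
        intro g
        apply Fin.ext
        rw [val_finRotate_iterate hj]
        simpa using Nat.mod_eq_of_lt k.isLt
      have e1 := Phi_iterate_g g₁ σ₁ k.val ⟨0, hj⟩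
      have e2 := Phi_iterate_g g₂ σ₂ k.val ⟨0, hj⟩
      rw [hr g₁] at e1
      rw [hr g₂] at e2
      rw [← e1, ← e2, hπ, hi]
    subst hg
    have hσ : σ₁ = σ₂ := by
      apply Equiv.ext
      intro y
      apply Subtype.ext
      rw [← Phi_apply_out' g₁ σ₁ y, ← Phi_apply_out' g₁ σ₂ y, hπ]
    rw [hσ]
  · rintro ⟨⟨π, i⟩, hmp⟩
    simp only at hmp
    have hmod : ∀ s t : ℕ, s % j = t % j → (⇑π)^[s] i = (⇑π)^[t] i := by
      intro s t hst
      rw [← Function.iterate_mod_minimalPeriod_eq (n := s),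
        ← Function.iterate_mod_minimalPeriod_eq (n := t), hmp, hst]
    set g : Fin j ↪ Fin n := ⟨fun k => (⇑π)^[k.val] i, by
      intro a b hab
      apply Fin.ext
      refine Function.iterate_injOn_Iio_minimalPeriod ?_ ?_ hab <;>
        · rw [Set.mem_Iio, hmp]; exact Fin.isLt _⟩ with hgdef
    have hgk : ∀ k : Fin j, g k = (⇑π)^[k.val] i := fun k => rfl
    have hrange : ∀ x : Fin n, x ∈ Set.range ⇑g ↔ π x ∈ Set.range ⇑g := by
      intro x
      constructor
      · rintro ⟨k, rfl⟩
        refine ⟨⟨(k.val + 1) % j, Nat.mod_lt _ (by omega)⟩, ?_⟩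
        rw [hgk, hgk]
        simp only
        rw [hmod ((k.val + 1) % j) (k.val + 1) (Nat.mod_mod_of_dvd _ dvd_rfl),
          Function.iterate_succ_apply']
      · rintro ⟨k, hk⟩
        refine ⟨⟨(k.val + j - 1) % j, Nat.mod_lt _ (by omega)⟩, ?_⟩
        rw [hgk] at hk ⊢
        simp only
        apply π.injective
        rw [← Function.iterate_succ_apply' ⇑π, ← hk]
        exact hmod _ _ (by rw [modstep hj k.isLt, Nat.mod_eq_of_lt k.isLt])
    refine ⟨⟨g, π.subtypePerm fun x => not_iff_not.2 (hrange x).symm⟩, ?_⟩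
    apply Subtype.ext
    simp only [Phi']
    refine Prod.ext ?_ (by rw [hgk]; rfl)
    apply Equiv.ext
    intro x
    simp only
    by_cases hx : x ∈ Set.range ⇑g
    · obtain ⟨k, rfl⟩ := hx
      have h1 : Phi g (π.subtypePerm fun x => not_iff_not.2 (hrange x).symm) (g k) =
          g ((⇑(finRotate j))^[1] k) := by
        rw [← Phi_iterate_g, Function.iterate_one]
      rw [h1, hgk, hgk]
      have h2 : ((⇑(finRotate j))^[1] k).val = (k.val + 1) % j :=
        val_finRotate_iterate hj 1 k
      rw [h2]
      rw [hmod ((k.val + 1) % j) (k.val + 1) (Nat.mod_mod_of_dvd _ dvd_rfl),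
        Function.iterate_succ_apply']
    · rw [Phi_apply_out _ _ hx]
      rfl

end main4

section key
variable {n j : ℕ}

lemma key (α : ℕ → ℝ) (hj : 1 ≤ j) (hjn : j ≤ n) :
    ∑ π : Equiv.Perm (Fin n), ((j * numCycles π j : ℕ) : ℝ) * Real.exp (-(cycleWeight α π)) =
      (n.descFactorial j : ℝ) *
        (Real.exp (-α j) * ((n - j).factorial * hseq α (n - j))) := by
  classical
  have step1 : ∑ π : Equiv.Perm (Fin n), ((j * numCycles π j : ℕ) : ℝ) *
        Real.exp (-(cycleWeight α π)) =
      ∑ p : {p : Equiv.Perm (Fin n) × Fin n // Function.minimalPeriod ⇑p.1 p.2 = j},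
        Real.exp (-(cycleWeight α p.1.1)) := by
    rw [← Finset.sum_subtype (Finset.univ.filter
        fun q : Equiv.Perm (Fin n) × Fin n => Function.minimalPeriod ⇑q.1 q.2 = j)
        (fun q => by simp) (fun q : Equiv.Perm (Fin n) × Fin n =>
          Real.exp (-(cycleWeight α q.1)))]
    rw [Finset.sum_filter, Fintype.sum_prod_type]
    refine Finset.sum_congr rfl fun π _ => ?_
    simp only
    rw [← Finset.sum_filter, Finset.sum_const, nsmul_eq_mul, ← mul_nc π j,
      nc_eq_numCycles]
  have step2 : ∑ p : {p : Equiv.Perm (Fin n) × Fin n //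
        Function.minimalPeriod ⇑p.1 p.2 = j}, Real.exp (-(cycleWeight α p.1.1)) =
      ∑ gs : (Σ g : Fin j ↪ Fin n, Equiv.Perm {x : Fin n // x ∉ Set.range ⇑g}),
        Real.exp (-α j) * Real.exp (-(cw α gs.2)) := by
    refine (Fintype.sum_bijective (Phi' hj) (Phi'_bijective hj) _ _ fun gs => ?_).symm
    rw [Phi']
    simp only
    rw [← cw_eq_cycleWeight, cw_Phi α hj hjn, neg_add, Real.exp_add]
  rw [step1, step2, ← Finset.univ_sigma_univ, Finset.sum_sigma]
  have inner : ∀ g : Fin j ↪ Fin n,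
      ∑ σ : Equiv.Perm {x : Fin n // x ∉ Set.range ⇑g},
        Real.exp (-α j) * Real.exp (-(cw α σ)) =
      Real.exp (-α j) * ((n - j).factorial * hseq α (n - j)) := by
    intro g
    rw [← Finset.mul_sum, sum_exp_cw α, card_compl_range hjn g]
  rw [Finset.sum_congr rfl fun g _ => inner g, Finset.sum_const, nsmul_eq_mul,
    Finset.card_univ, Fintype.card_embedding_eq, Fintype.card_fin, Fintype.card_fin]

end key

end Aux

open Function Equiv

/-- `E_n(N_{a,b}) = ∑_{j=a}^b e^{-α_j} h_{n-j}/h_n` for `1 ≤ a ≤ b ≤ n`. -/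
theorem stmt1 (α : ℕ → ℝ) (n a b : ℕ) (ha : 1 ≤ a) (hab : a ≤ b) (hbn : b ≤ n) :
    En α n (fun π => (Nab a b π : ℝ)) =
      ∑ j ∈ Finset.Icc a b, Real.exp (-α j) * (hseq α (n - j) / hseq α n) := by
  have hnum : (∑ π : Equiv.Perm (Fin n), (Nab a b π : ℝ) * Real.exp (-(cycleWeight α π))) =
      ∑ j ∈ Finset.Icc a b, (n.descFactorial j : ℝ) *
        (Real.exp (-α j) * ((n - j).factorial * hseq α (n - j))) := by
    have hsw : ∀ π : Equiv.Perm (Fin n), (Nab a b π : ℝ) * Real.exp (-(cycleWeight α π)) =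
        ∑ j ∈ Finset.Icc a b,
          ((j * numCycles π j : ℕ) : ℝ) * Real.exp (-(cycleWeight α π)) := by
      intro π
      rw [Nab, Nat.cast_sum, Finset.sum_mul]
    rw [Finset.sum_congr rfl fun π _ => hsw π, Finset.sum_comm]
    refine Finset.sum_congr rfl fun j hj => ?_
    have hj' := Finset.mem_Icc.1 hj
    exact key α (by omega) (by omega)
  rw [En, hnum, Finset.sum_div]
  refine Finset.sum_congr rfl fun j hj => ?_
  obtain ⟨haj, hjb⟩ := Finset.mem_Icc.1 hj
  have hjn : j ≤ n := le_trans hjb hbn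
  have hfac : ((n - j).factorial : ℝ) * (n.descFactorial j : ℝ) = (n.factorial : ℝ) := by
    exact_mod_cast congrArg (Nat.cast : ℕ → ℝ) (Nat.factorial_mul_descFactorial hjn)
  have h1 : hseq α n ≠ 0 := ne_of_gt (hseq_pos α n)
  have h2 : (n.factorial : ℝ) ≠ 0 := Nat.cast_ne_zero.2 (Nat.factorial_ne_zero n)
  field_simp
  linear_combination (hseq α (n - j)) * hfac
end

section
/- For every n ≥ 1, h_n ≥ (1/n) e^{−α_1} h_{n−1}, and consequently h_n ≥ e^{−n α_1}/n!. -/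
open Finset Filter

/-- Extend a permutation of `Fin m` to `Fin (m+1)` fixing `0`. -/
noncomputable def extPerm {m : ℕ} (σ : Equiv.Perm (Fin m)) : Equiv.Perm (Fin (m + 1)) :=
  Equiv.Perm.decomposeFin.symm (0, σ)

lemma extPerm_zero {m : ℕ} (σ : Equiv.Perm (Fin m)) : extPerm σ 0 = 0 :=
  Equiv.Perm.decomposeFin_symm_apply_zero 0 σ

lemma extPerm_succ {m : ℕ} (σ : Equiv.Perm (Fin m)) (i : Fin m) :
    extPerm σ i.succ = (σ i).succ := by
  simp [extPerm, Equiv.Perm.decomposeFin_symm_apply_succ]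

lemma extPerm_injective {m : ℕ} : Function.Injective (extPerm (m := m)) := by
  intro a b h
  have h2 : ((0 : Fin (m+1)), a) = ((0 : Fin (m+1)), b) :=
    Equiv.Perm.decomposeFin.symm.injective h
  exact (Prod.ext_iff.mp h2).2

lemma extPerm_iterate {m : ℕ} (σ : Equiv.Perm (Fin m)) (k : ℕ) (i : Fin m) :
    (⇑(extPerm σ))^[k] i.succ = ((⇑σ)^[k] i).succ := by
  induction k with
  | zero => rfl
  | succ k ih =>
      rw [Function.iterate_succ_apply', ih, Function.iterate_succ_apply', extPerm_succ]

lemma cycleLen_ext_zero {m : ℕ} (σ : Equiv.Perm (Fin m)) : cycleLen (extPerm σ) 0 = 1 :=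
  Function.minimalPeriod_eq_one_iff_isFixedPt.mpr (extPerm_zero σ)

lemma cycleLen_ext_succ {m : ℕ} (σ : Equiv.Perm (Fin m)) (i : Fin m) :
    cycleLen (extPerm σ) i.succ = cycleLen σ i := by
  unfold cycleLen
  rw [Function.minimalPeriod_eq_minimalPeriod_iff]
  intro k
  simp [Function.IsPeriodicPt, Function.IsFixedPt, extPerm_iterate, Fin.succ_inj]

lemma card_filter_ext {m : ℕ} (σ : Equiv.Perm (Fin m)) (ℓ : ℕ) :
    (Finset.univ.filter fun i : Fin (m+1) => cycleLen (extPerm σ) i = ℓ).card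
      = (if 1 = ℓ then 1 else 0)
        + (Finset.univ.filter fun i => cycleLen σ i = ℓ).card := by
  rw [Finset.card_filter, Finset.card_filter, Fin.sum_univ_succ]
  congr 1
  · rw [cycleLen_ext_zero]
  · exact Finset.sum_congr rfl fun i _ => by rw [cycleLen_ext_succ]

lemma numCycles_ext {m : ℕ} (σ : Equiv.Perm (Fin m)) (ℓ : ℕ) :
    numCycles (extPerm σ) ℓ = numCycles σ ℓ + (if ℓ = 1 then 1 else 0) := by
  unfold numCycles
  rw [card_filter_ext]
  by_cases h : ℓ = 1
  · subst h; simp [Nat.add_comm]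
  · simp [h, Ne.symm h]

lemma numCycles_top {m : ℕ} (σ : Equiv.Perm (Fin m)) : numCycles σ (m+1) = 0 := by
  unfold numCycles
  apply Nat.div_eq_of_lt
  calc (Finset.univ.filter fun i => cycleLen σ i = m+1).card
      ≤ (Finset.univ : Finset (Fin m)).card := Finset.card_filter_le _ _
    _ = m := by simp
    _ < m + 1 := Nat.lt_succ_self m

lemma cycleWeight_ext (α : ℕ → ℝ) {m : ℕ} (σ : Equiv.Perm (Fin m)) :
    cycleWeight α (extPerm σ) = α 1 + cycleWeight α σ := by
  unfold cycleWeight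
  have h1 : ∀ ℓ ∈ Finset.Icc 1 (m+1), α ℓ * (numCycles (extPerm σ) ℓ : ℝ)
      = α ℓ * (numCycles σ ℓ : ℝ) + (if ℓ = 1 then α 1 else 0) := by
    intro ℓ hℓ
    rw [numCycles_ext]
    by_cases h : ℓ = 1
    · subst h; push_cast; ring
    · simp [h]
  rw [Finset.sum_congr rfl h1, Finset.sum_add_distrib, Finset.sum_ite_eq' (Finset.Icc 1 (m+1))
    1 (fun _ => α 1)]
  rw [Finset.sum_Icc_succ_top (by omega : 1 ≤ m + 1), numCycles_top]
  simp
  ring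

lemma hseq_succ (α : ℕ → ℝ) (m : ℕ) :
    (1 / ((m : ℝ) + 1)) * Real.exp (-α 1) * hseq α m ≤ hseq α (m + 1) := by
  have hsum : Real.exp (-α 1) * ∑ σ : Equiv.Perm (Fin m), Real.exp (-(cycleWeight α σ))
      ≤ ∑ τ : Equiv.Perm (Fin (m+1)), Real.exp (-(cycleWeight α τ)) := by
    rw [Finset.mul_sum]
    calc ∑ σ : Equiv.Perm (Fin m), Real.exp (-α 1) * Real.exp (-(cycleWeight α σ))
        = ∑ σ : Equiv.Perm (Fin m), Real.exp (-(cycleWeight α (extPerm σ))) := by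
          refine Finset.sum_congr rfl fun σ _ => ?_
          rw [cycleWeight_ext, ← Real.exp_add]
          ring_nf
      _ = ∑ τ ∈ Finset.univ.image extPerm, Real.exp (-(cycleWeight α τ)) := by
          rw [Finset.sum_image fun a _ b _ h => extPerm_injective h]
      _ ≤ ∑ τ : Equiv.Perm (Fin (m+1)), Real.exp (-(cycleWeight α τ)) :=
          Finset.sum_le_sum_of_subset_of_nonneg (Finset.subset_univ _)
            (fun _ _ _ => (Real.exp_pos _).le)
  unfold hseq
  rw [Nat.factorial_succ]
  have hf : (0:ℝ) < (m.factorial : ℝ) := by positivity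
  have h2 : (1 / ((m : ℝ) + 1)) * Real.exp (-α 1) *
        ((1 / (m.factorial : ℝ)) * ∑ σ : Equiv.Perm (Fin m), Real.exp (-(cycleWeight α σ)))
      = (1 / (((m:ℝ) + 1) * (m.factorial : ℝ))) *
        (Real.exp (-α 1) * ∑ σ : Equiv.Perm (Fin m), Real.exp (-(cycleWeight α σ))) := by
    field_simp
  rw [h2]
  push_cast
  exact mul_le_mul_of_nonneg_left hsum (by positivity)

lemma hseq_lower (α : ℕ → ℝ) : ∀ n : ℕ,
    Real.exp (-(n : ℝ) * α 1) / (n.factorial : ℝ) ≤ hseq α n := by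
  intro n
  induction n with
  | zero => simp [hseq, cycleWeight]
  | succ m ih =>
      have h1 : Real.exp (-((m+1 : ℕ) : ℝ) * α 1) / ((m+1).factorial : ℝ)
          = (1 / ((m : ℝ) + 1)) * Real.exp (-α 1) *
            (Real.exp (-(m : ℝ) * α 1) / (m.factorial : ℝ)) := by
        rw [Nat.factorial_succ]
        push_cast
        rw [show (-((m:ℝ)+1) * α 1) = (-α 1) + (-(m:ℝ) * α 1) by ring, Real.exp_add]
        have hf : (0:ℝ) < (m.factorial : ℝ) := by positivity
        field_simp
      rw [h1]
      calc (1 / ((m : ℝ) + 1)) * Real.exp (-α 1) *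
            (Real.exp (-(m : ℝ) * α 1) / (m.factorial : ℝ))
          ≤ (1 / ((m : ℝ) + 1)) * Real.exp (-α 1) * hseq α m := by
            apply mul_le_mul_of_nonneg_left ih (by positivity)
        _ ≤ hseq α (m + 1) := hseq_succ α m

/-- `h_n ≥ (1/n) e^{−α_1} h_{n−1}` and consequently `h_n ≥ e^{−n α_1}/n!`, for `n ≥ 1`. -/
theorem stmt7 (α : ℕ → ℝ) (n : ℕ) (hn : 1 ≤ n) :
    (1 / (n : ℝ)) * Real.exp (-α 1) * hseq α (n - 1) ≤ hseq α n ∧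
    Real.exp (-(n : ℝ) * α 1) / (n.factorial : ℝ) ≤ hseq α n := by
  obtain ⟨m, rfl⟩ : ∃ m, n = m + 1 := ⟨n - 1, (Nat.succ_pred_eq_of_pos hn).symm⟩
  refine ⟨?_, hseq_lower α (m + 1)⟩
  have := hseq_succ α m
  simpa using this
end

section
/- If the sequence (α_ℓ) is subadditive, i.e. α_{ℓ_1+…+ℓ_k} ≤ α_{ℓ_1} + … + α_{ℓ_k} for all ℓ_1,…,ℓ_k ≥ 1, then h_n ≤ e^{−α_n} for all n ≥ 1; if (α_ℓ) is superadditive, i.e. α_{ℓ_1+…+ℓ_k} ≥ α_{ℓ_1} + … + α_{ℓ_k}, then h_n ≥ e^{−α_n} for all n ≥ 1. -/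
open Finset Filter

section Aux

variable {n : ℕ} (π : Equiv.Perm (Fin n))

lemma mem_periodicPts_perm (x : Fin n) : x ∈ Function.periodicPts ⇑π :=
  ⟨orderOf π, orderOf_pos π, by
    show (⇑π)^[orderOf π] x = x
    rw [← Equiv.Perm.coe_pow, pow_orderOf_eq_one]; rfl⟩

lemma cycleLen_pos (x : Fin n) : 0 < cycleLen π x :=
  Function.minimalPeriod_pos_of_mem_periodicPts (mem_periodicPts_perm π x)

lemma cycleLen_pow (x : Fin n) (k : ℕ) : cycleLen π ((π ^ k) x) = cycleLen π x :=
  Function.minimalPeriod_apply_iterate (mem_periodicPts_perm π x) k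

lemma cycleLen_sameCycle {x y : Fin n} (h : π.SameCycle x y) :
    cycleLen π y = cycleLen π x := by
  obtain ⟨k, -, rfl⟩ := h.exists_pow_eq'
  exact cycleLen_pow π x k

lemma orbit_card (x : Fin n) :
    (univ.filter fun j => π.SameCycle x j).card = cycleLen π x := by
  classical
  set c := cycleLen π x with hc
  have hcpos : 0 < c := cycleLen_pos π x
  set L : List (Fin n) := (List.range c).map fun k => (π ^ k) x with hL
  have hnd : L.Nodup := by
    rw [List.nodup_map_iff_inj_on List.nodup_range]
    intro a ha b hb hab
    rw [List.mem_range] at ha hb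
    exact (Function.iterate_eq_iterate_iff_of_lt_minimalPeriod ha hb).mp hab
  have hset : (univ.filter fun j => π.SameCycle x j) = L.toFinset := by
    ext j
    simp only [mem_filter, mem_univ, true_and, List.mem_toFinset, hL, List.mem_map,
      List.mem_range]
    constructor
    · intro h
      obtain ⟨k, -, hk⟩ := h.exists_pow_eq'
      refine ⟨k % c, Nat.mod_lt _ hcpos, ?_⟩
      rw [← hk]
      exact Function.iterate_mod_minimalPeriod_eq
    · rintro ⟨k, -, rfl⟩
      exact ⟨(k : ℤ), by simp [zpow_natCast]⟩
  rw [hset, List.card_toFinset, hnd.dedup]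
  simp [hL]

lemma sameCycle_class_eq {x y : Fin n} (h : π.SameCycle x y) :
    (univ.filter fun j => π.SameCycle y j) = (univ.filter fun j => π.SameCycle x j) := by
  classical
  ext j
  simp only [mem_filter, mem_univ, true_and]
  exact ⟨fun hj => h.trans hj, fun hj => h.symm.trans hj⟩

lemma dvd_card_filter_cycleLen (ℓ : ℕ) :
    ℓ ∣ (univ.filter fun i => cycleLen π i = ℓ).card := by
  classical
  set S := univ.filter fun i => cycleLen π i = ℓ with hS
  set key : Fin n → Finset (Fin n) := fun i => univ.filter fun j => π.SameCycle i j with hkey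
  have hmem : ∀ x ∈ S, key x ∈ S.image key := fun x hx => mem_image_of_mem key hx
  rw [card_eq_sum_card_fiberwise hmem]
  refine Finset.dvd_sum fun t ht => ?_
  obtain ⟨i0, hi0, rfl⟩ := Finset.mem_image.mp ht
  have hfib : S.filter (fun x => key x = key i0) = key i0 := by
    ext j
    constructor
    · intro hj
      rw [mem_filter] at hj
      have hjj : j ∈ key j := by
        simp only [hkey, mem_filter, mem_univ, true_and]
        exact Equiv.Perm.SameCycle.refl π j
      rwa [hj.2] at hjj
    · intro hj
      have hxy : π.SameCycle i0 j := by
        simp only [hkey, mem_filter, mem_univ, true_and] at hj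
        exact hj
      rw [mem_filter]
      refine ⟨?_, by rw [hkey]; exact sameCycle_class_eq π hxy⟩
      rw [hS, mem_filter]
      refine ⟨mem_univ j, ?_⟩
      rw [cycleLen_sameCycle π hxy]
      exact (mem_filter.mp hi0).2
  rw [hfib, hkey, orbit_card]
  rw [hS] at hi0
  exact (mem_filter.mp hi0).2 ▸ dvd_refl _

lemma mul_numCycles (ℓ : ℕ) (hℓ : 0 < ℓ) :
    ℓ * numCycles π ℓ = (univ.filter fun i => cycleLen π i = ℓ).card :=
  Nat.mul_div_cancel' (dvd_card_filter_cycleLen π ℓ)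

lemma sum_mul_numCycles : ∑ ℓ ∈ Icc 1 n, ℓ * numCycles π ℓ = n := by
  classical
  have h1 : ∀ ℓ ∈ Icc 1 n, ℓ * numCycles π ℓ = (univ.filter fun i => cycleLen π i = ℓ).card :=
    fun ℓ hℓ => mul_numCycles π ℓ (mem_Icc.mp hℓ).1
  rw [Finset.sum_congr rfl h1]
  have hmem : ∀ x : Fin n, x ∈ (univ : Finset (Fin n)) → cycleLen π x ∈ Icc 1 n := by
    intro x _
    rw [mem_Icc]
    refine ⟨cycleLen_pos π x, ?_⟩
    calc cycleLen π x = (univ.filter fun j => π.SameCycle x j).card := (orbit_card π x).symm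
      _ ≤ (univ : Finset (Fin n)).card := card_filter_le _ _
      _ = n := by simp
  rw [← card_eq_sum_card_fiberwise hmem]
  simp

lemma exists_decomp (α : ℕ → ℝ) (hn : 1 ≤ n) :
    ∃ k : ℕ, 1 ≤ k ∧ ∃ ℓ : Fin k → ℕ, (∀ i, 1 ≤ ℓ i) ∧ (∑ i, ℓ i) = n ∧
      (∑ i, α (ℓ i)) = cycleWeight α π := by
  classical
  set M : Multiset ℕ := ∑ ℓ ∈ Icc 1 n, Multiset.replicate (numCycles π ℓ) ℓ with hM
  have hsum : ∀ {β : Type} [AddCommMonoid β] (s : Finset ℕ) (f : ℕ → Multiset β),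
      (∑ l ∈ s, f l).sum = ∑ l ∈ s, (f l).sum := by
    intro β _ s f
    induction s using Finset.induction_on with
    | empty => simp
    | insert _ _ ha ih => rw [Finset.sum_insert ha, Finset.sum_insert ha, Multiset.sum_add, ih]
  have hMsum : M.sum = n := by
    have h2 : ∑ l ∈ Icc 1 n, (Multiset.replicate (numCycles π l) l).sum
        = ∑ l ∈ Icc 1 n, l * numCycles π l :=
      Finset.sum_congr rfl fun ℓ _ => by simp [Multiset.sum_replicate, mul_comm]
    rw [hM, hsum, h2, sum_mul_numCycles]
  have hMmap : (M.map α).sum = cycleWeight α π := by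
    have : M.map α = ∑ ℓ ∈ Icc 1 n, Multiset.replicate (numCycles π ℓ) (α ℓ) := by
      rw [hM]
      induction (Icc 1 n) using Finset.induction_on with
      | empty => simp
      | insert _ _ ha ih =>
          rw [Finset.sum_insert ha, Finset.sum_insert ha, Multiset.map_add, ih,
            Multiset.map_replicate]
    rw [this, hsum, cycleWeight]
    exact Finset.sum_congr rfl fun ℓ _ => by
      simp [Multiset.sum_replicate, mul_comm, nsmul_eq_mul]
  have hMel : ∀ x ∈ M, 1 ≤ x := by
    intro x hx
    rw [hM, Multiset.mem_sum] at hx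
    obtain ⟨ℓ, hℓ, hx⟩ := hx
    rw [Multiset.eq_of_mem_replicate hx]
    exact (mem_Icc.mp hℓ).1
  set L := M.toList with hLdef
  refine ⟨L.length, ?_, fun i => L.get i, ?_, ?_, ?_⟩
  · rcases Nat.eq_zero_or_pos L.length with h0 | h1
    · exfalso
      have hL0 : L = [] := List.length_eq_zero_iff.mp h0
      have hM0 : M = 0 := by rwa [Multiset.toList_eq_nil] at hL0
      rw [hM0] at hMsum
      simp at hMsum
      omega
    · exact h1
  · intro i
    exact hMel _ (by rw [← Multiset.mem_toList]; exact List.get_mem L i)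
  · have : ∑ i, L.get i = L.sum := by
      rw [← List.sum_ofFn, List.ofFn_get]
    rw [this, ← hMsum, hLdef, Multiset.sum_toList]
  · have h1 : ∑ i, α (L.get i) = (L.map α).sum := by
      rw [← List.sum_ofFn]
      congr 1
      exact List.ofFn_getElem_eq_map L α
    rw [h1, ← hMmap]
    have h2 : ((L.map α : List ℝ) : Multiset ℝ) = M.map α := by
      rw [hLdef, ← Multiset.map_coe, Multiset.coe_toList]
    calc (L.map α).sum = ((L.map α : List ℝ) : Multiset ℝ).sum := (Multiset.sum_coe _).symm
      _ = (M.map α).sum := by rw [h2]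

end Aux

/-- If `(α_ℓ)` is subadditive then `h_n ≤ e^{−α_n}`; if it is superadditive then `h_n ≥ e^{−α_n}`. -/
theorem stmt9 (α : ℕ → ℝ) (n : ℕ) (hn : 1 ≤ n) :
    ((∀ k : ℕ, 1 ≤ k → ∀ ℓ : Fin k → ℕ, (∀ i, 1 ≤ ℓ i) →
        α (∑ i, ℓ i) ≤ ∑ i, α (ℓ i)) → hseq α n ≤ Real.exp (-α n)) ∧
    ((∀ k : ℕ, 1 ≤ k → ∀ ℓ : Fin k → ℕ, (∀ i, 1 ≤ ℓ i) →
        ∑ i, α (ℓ i) ≤ α (∑ i, ℓ i)) → Real.exp (-α n) ≤ hseq α n) := by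
  have hfact : (0 : ℝ) < (n.factorial : ℝ) := by positivity
  have hcst : ∀ c : ℝ, (1 / (n.factorial : ℝ)) * ∑ _π : Equiv.Perm (Fin n), c = c := by
    intro c
    rw [Finset.sum_const, card_univ, Fintype.card_perm, Fintype.card_fin, nsmul_eq_mul]
    field_simp
  constructor
  · intro hsub
    have key : ∀ π : Equiv.Perm (Fin n), Real.exp (-(cycleWeight α π)) ≤ Real.exp (-α n) := by
      intro π
      obtain ⟨k, hk, ℓf, h1, h2, h3⟩ := exists_decomp π α hn
      have h4 := hsub k hk ℓf h1
      rw [h2, h3] at h4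
      exact Real.exp_le_exp.2 (by linarith)
    calc hseq α n ≤ (1 / (n.factorial : ℝ)) * ∑ _π : Equiv.Perm (Fin n), Real.exp (-α n) :=
          mul_le_mul_of_nonneg_left (Finset.sum_le_sum fun π _ => key π) (by positivity)
      _ = Real.exp (-α n) := hcst _
  · intro hsup
    have key : ∀ π : Equiv.Perm (Fin n), Real.exp (-α n) ≤ Real.exp (-(cycleWeight α π)) := by
      intro π
      obtain ⟨k, hk, ℓf, h1, h2, h3⟩ := exists_decomp π α hn
      have h4 := hsup k hk ℓf h1
      rw [h2, h3] at h4
      exact Real.exp_le_exp.2 (by linarith)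
    calc Real.exp (-α n)
        = (1 / (n.factorial : ℝ)) * ∑ _π : Equiv.Perm (Fin n), Real.exp (-α n) := (hcst _).symm
      _ ≤ hseq α n :=
          mul_le_mul_of_nonneg_left (Finset.sum_le_sum fun π _ => key π) (by positivity)
end

section
/- Let Λ_1, Λ_2 be disjoint open bounded subsets of ℝ^d. Then for any integers N_1, N_2 ≥ 0, the canonical partition functions satisfy Y(Λ_1 ∪ Λ_2, N_1 + N_2) ≥ Y(Λ_1, N_1) · Y(Λ_2, N_2); equivalently, the free energy F(Λ,N) = −log Y(Λ,N) is subadditive: F(Λ_1 ∪ Λ_2, N_1+N_2) ≤ F(Λ_1,N_1) + F(Λ_2,N_2). -/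
open Finset Filter MeasureTheory
open scoped ENNReal

/-- Canonical partition function `Y(Λ,N) = (1/N!) ∫_{Λ^N} ∑_{π∈S_N} e^{-H(x,π)} dx`,
where `φ = e^{-ξ}` is the Boltzmann weight of a jump and
`e^{-H(x,π)} = (∏_i φ(x_i - x_{π(i)})) e^{-∑_ℓ α_ℓ r_ℓ(π)}`; valued in `[0,∞]`. -/
noncomputable def YE (d : ℕ) (φ : (Fin d → ℝ) → ℝ) (α : ℕ → ℝ)
    (Λ : Set (Fin d → ℝ)) (N : ℕ) : ℝ≥0∞ :=
  (N.factorial : ℝ≥0∞)⁻¹ * ∑ π : Equiv.Perm (Fin N),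
    (∫⁻ x : Fin N → Fin d → ℝ in Set.univ.pi (fun _ : Fin N => Λ),
        ∏ i, ENNReal.ofReal (φ (x i - x (π i))) ∂volume) *
      ENNReal.ofReal (Real.exp (-(cycleWeight α π)))

/-- Grand-canonical partition function `Z(Λ,μ) = ∑_{N≥0} e^{μN} Y(Λ,N)`. -/
noncomputable def ZE (d : ℕ) (φ : (Fin d → ℝ) → ℝ) (α : ℕ → ℝ)
    (Λ : Set (Fin d → ℝ)) (μ : ℝ) : ℝ≥0∞ :=
  ∑' N : ℕ, ENNReal.ofReal (Real.exp (μ * N)) * YE d φ α Λ N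

/-- Finite-volume pressure `p_Λ(μ) = (1/|Λ|) log Z(Λ,μ)`, valued in `[-∞,∞]`. -/
noncomputable def pressureE (d : ℕ) (φ : (Fin d → ℝ) → ℝ) (α : ℕ → ℝ)
    (Λ : Set (Fin d → ℝ)) (μ : ℝ) : EReal :=
  (((volume Λ).toReal⁻¹ : ℝ) : EReal) * ENNReal.log (ZE d φ α Λ μ)

/-- Infinite-volume pressure `p(μ) = ∑_{n≥1} (e^{μn-α_n}/n) ∫_{ℝ^d} e^{-nε(k)} dk ∈ [0,∞]`. -/
noncomputable def pLimit (d : ℕ) (α : ℕ → ℝ) (ε : (Fin d → ℝ) → ℝ) (μ : ℝ) : ℝ≥0∞ :=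
  ∑' n : ℕ, (ENNReal.ofReal (Real.exp (μ * (n + 1) - α (n + 1))) / ((n : ℝ≥0∞) + 1)) *
    ∫⁻ k : Fin d → ℝ, ENNReal.ofReal (Real.exp (-((n : ℝ) + 1) * ε k)) ∂volume

/-- `Λ_n → ℝ^d` in the sense of Fisher: `|Λ_n| → ∞` and
`sup_n |∂_{ε diam Λ_n} Λ_n| / |Λ_n| → 0` as `ε → 0`, where `∂_r Λ = {x : dist(x,∂Λ) ≤ r}`. -/
def IsFisher (d : ℕ) (Λseq : ℕ → Set (Fin d → ℝ)) : Prop :=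
  Tendsto (fun n => (volume (Λseq n)).toReal) atTop atTop ∧
  ∀ δ : ℝ, 0 < δ → ∃ ε : ℝ, 0 < ε ∧ ∀ n,
    (volume {x : Fin d → ℝ |
        Metric.infDist x (frontier (Λseq n)) ≤ ε * Metric.diam (Λseq n)}).toReal
      ≤ δ * (volume (Λseq n)).toReal

/-- `Y(Λ, t)` for real `t ≥ 0`, extended by linear interpolation between consecutive integers. -/
noncomputable def Yinterp (d : ℕ) (φ : (Fin d → ℝ) → ℝ) (α : ℕ → ℝ)
    (Λ : Set (Fin d → ℝ)) (t : ℝ) : ℝ :=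
  (1 - (t - (⌊t⌋₊ : ℝ))) * (YE d φ α Λ ⌊t⌋₊).toReal
    + (t - (⌊t⌋₊ : ℝ)) * (YE d φ α Λ (⌊t⌋₊ + 1)).toReal

/-- Finite-volume free energy `q_Λ(ρ) = -(1/|Λ|) log Y(Λ, |Λ|ρ)`. -/
noncomputable def freeEnergy (d : ℕ) (φ : (Fin d → ℝ) → ℝ) (α : ℕ → ℝ)
    (Λ : Set (Fin d → ℝ)) (ρ : ℝ) : ℝ :=
  -((volume Λ).toReal)⁻¹ * Real.log (Yinterp d φ α Λ ((volume Λ).toReal * ρ))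

section AuxStmt11
open Function

lemma aux_dvd_card_minimalPeriod {β : Type*} [Fintype β] [DecidableEq β]
    (σ : Equiv.Perm β) (ℓ : ℕ) (hℓ : 1 ≤ ℓ) :
    ℓ ∣ (Finset.univ.filter fun i => Function.minimalPeriod σ i = ℓ).card := by
  classical
  set A := Finset.univ.filter fun i => Function.minimalPeriod (⇑σ) i = ℓ with hA
  set F : β → Finset β := fun i => ((List.range ℓ).map fun k => (⇑σ)^[k] i).toFinset with hF
  have hmemA : ∀ i, i ∈ A ↔ Function.minimalPeriod (⇑σ) i = ℓ := by
    intro i; simp [hA]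
  have hmemF : ∀ i j, j ∈ F i ↔ ∃ k < ℓ, (⇑σ)^[k] i = j := by
    intro i j; simp [hF, List.mem_toFinset, List.mem_map, List.mem_range]; exact exists_congr fun k => and_congr_right fun _ => eq_comm
  have hper : ∀ i ∈ A, i ∈ periodicPts (⇑σ) := fun i hi =>
    Function.minimalPeriod_pos_iff_mem_periodicPts.1 (by rw [(hmemA i).1 hi]; omega)
  have hcardF : ∀ i ∈ A, (F i).card = ℓ := by
    intro i hi
    have hmp := (hmemA i).1 hi
    have hnd : (((List.range ℓ).map fun k => (⇑σ)^[k] i)).Nodup := by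
      rw [List.nodup_map_iff_inj_on (List.nodup_range)]
      intro m hm n hn h
      rw [List.mem_range] at hm hn
      exact (Function.iterate_eq_iterate_iff_of_lt_minimalPeriod
        (by rw [hmp]; exact hm) (by rw [hmp]; exact hn)).1 h
    show (((List.range ℓ).map fun k => (⇑σ)^[k] i)).toFinset.card = ℓ
    rw [List.toFinset_card_of_nodup hnd, List.length_map, List.length_range]
  have hFmemA : ∀ i ∈ A, ∀ j ∈ F i, j ∈ A := by
    intro i hi j hj
    obtain ⟨k, -, rfl⟩ := (hmemF i j).1 hj
    rw [hmemA, Function.minimalPeriod_apply_iterate (hper i hi) k]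
    exact (hmemA i).1 hi
  have hFeq : ∀ i ∈ A, ∀ j ∈ F i, F j = F i := by
    intro i hi j hj
    have hmp := (hmemA i).1 hi
    obtain ⟨k, hk, rfl⟩ := (hmemF i j).1 hj
    have hsub : F ((⇑σ)^[k] i) ⊆ F i := by
      intro x hx
      obtain ⟨m, hm, rfl⟩ := (hmemF _ x).1 hx
      rw [hmemF]
      refine ⟨(m + k) % ℓ, Nat.mod_lt _ (by omega), ?_⟩
      rw [← hmp, Function.iterate_mod_minimalPeriod_eq]
      exact Function.iterate_add_apply _ m k i
    exact Finset.eq_of_subset_of_card_le hsub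
      (by rw [hcardF i hi, hcardF _ (hFmemA i hi _ hj)])
  have hfiber : ∀ i ∈ A, (A.filter fun j => F j = F i) = F i := by
    intro i hi
    ext j
    simp only [Finset.mem_filter]
    constructor
    · rintro ⟨hjA, hFj⟩
      rw [← hFj, hmemF]
      exact ⟨0, by omega, rfl⟩
    · intro hj
      exact ⟨hFmemA i hi j hj, hFeq i hi j hj⟩
  have hcount : A.card = ∑ b ∈ A.image F, (A.filter fun j => F j = b).card :=
    Finset.card_eq_sum_card_fiberwise (fun x hx => Finset.mem_image_of_mem F hx)
  rw [hcount]
  refine Finset.dvd_sum fun b hb => ?_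
  obtain ⟨i, hi, rfl⟩ := Finset.mem_image.1 hb
  rw [hfiber i hi, hcardF i hi]

lemma aux_minimalPeriod_permCongr {α β : Type*} (e : α ≃ β) (σ : Equiv.Perm α) (i : α) :
    Function.minimalPeriod (e.permCongr σ) (e i) = Function.minimalPeriod σ i := by
  have hsc : Function.Semiconj e σ (e.permCongr σ) := fun a => by
    simp [Equiv.permCongr_apply]
  refine Function.minimalPeriod_eq_minimalPeriod_iff.2 fun n => ?_
  have := (hsc.iterate_right n).eq i
  constructor <;> intro h <;>
    [skip; skip] <;>
    · unfold Function.IsPeriodicPt Function.IsFixedPt at *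
      first
      | (rw [← this] at h; exact e.injective h)
      | (rw [← this, h])

lemma aux_minimalPeriod_sumCongr_inl {α β : Type*} (π₁ : Equiv.Perm α) (π₂ : Equiv.Perm β)
    (a : α) : Function.minimalPeriod (Equiv.Perm.sumCongr π₁ π₂) (Sum.inl a)
      = Function.minimalPeriod π₁ a := by
  have hsc : Function.Semiconj (Sum.inl : α → α ⊕ β) π₁ (Equiv.Perm.sumCongr π₁ π₂) :=
    fun x => by simp
  refine (Function.minimalPeriod_eq_minimalPeriod_iff.2 fun n => ?_).symm
  have := (hsc.iterate_right n).eq a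
  unfold Function.IsPeriodicPt Function.IsFixedPt
  constructor <;> intro h
  · rw [← this, h]
  · rw [← this] at h; exact Sum.inl_injective h

lemma aux_minimalPeriod_sumCongr_inr {α β : Type*} (π₁ : Equiv.Perm α) (π₂ : Equiv.Perm β)
    (b : β) : Function.minimalPeriod (Equiv.Perm.sumCongr π₁ π₂) (Sum.inr b)
      = Function.minimalPeriod π₂ b := by
  have hsc : Function.Semiconj (Sum.inr : β → α ⊕ β) π₂ (Equiv.Perm.sumCongr π₁ π₂) :=
    fun x => by simp
  refine (Function.minimalPeriod_eq_minimalPeriod_iff.2 fun n => ?_).symm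
  have := (hsc.iterate_right n).eq b
  unfold Function.IsPeriodicPt Function.IsFixedPt
  constructor <;> intro h
  · rw [← this, h]
  · rw [← this] at h; exact Sum.inr_injective h

lemma aux_cnt_split {N₁ N₂ : ℕ} (e : (Fin N₁ ⊕ Fin N₂) ≃ Fin (N₁ + N₂))
    (π₁ : Equiv.Perm (Fin N₁)) (π₂ : Equiv.Perm (Fin N₂)) (ℓ : ℕ) :
    (Finset.univ.filter fun i =>
        Function.minimalPeriod (e.permCongr (Equiv.Perm.sumCongr π₁ π₂)) i = ℓ).card
      = (Finset.univ.filter fun i => Function.minimalPeriod π₁ i = ℓ).card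
        + (Finset.univ.filter fun i => Function.minimalPeriod π₂ i = ℓ).card := by
  classical
  rw [Finset.card_filter, Finset.card_filter, Finset.card_filter,
    ← Equiv.sum_comp e (fun i => if Function.minimalPeriod
      (⇑(e.permCongr (Equiv.Perm.sumCongr π₁ π₂))) i = ℓ then (1:ℕ) else 0),
    Fintype.sum_sum_type]
  congr 1
  · exact Finset.sum_congr rfl fun a _ => by
      rw [aux_minimalPeriod_permCongr, aux_minimalPeriod_sumCongr_inl]
  · exact Finset.sum_congr rfl fun b _ => by
      rw [aux_minimalPeriod_permCongr, aux_minimalPeriod_sumCongr_inr]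


lemma aux_numCycles_split {N₁ N₂ : ℕ} (e : (Fin N₁ ⊕ Fin N₂) ≃ Fin (N₁ + N₂))
    (π₁ : Equiv.Perm (Fin N₁)) (π₂ : Equiv.Perm (Fin N₂)) (ℓ : ℕ) (hℓ : 1 ≤ ℓ) :
    numCycles (e.permCongr (Equiv.Perm.sumCongr π₁ π₂)) ℓ
      = numCycles π₁ ℓ + numCycles π₂ ℓ := by
  unfold numCycles cycleLen
  rw [aux_cnt_split e π₁ π₂ ℓ]
  exact Nat.add_div_of_dvd_right (aux_dvd_card_minimalPeriod π₁ ℓ hℓ)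

lemma aux_numCycles_zero {n : ℕ} (π : Equiv.Perm (Fin n)) (ℓ : ℕ) (hℓ : n < ℓ) :
    numCycles π ℓ = 0 := by
  unfold numCycles
  refine Nat.div_eq_of_lt ?_
  calc (Finset.univ.filter fun i => cycleLen π i = ℓ).card
      ≤ (Finset.univ : Finset (Fin n)).card := Finset.card_filter_le _ _
    _ = n := Finset.card_fin n
    _ < ℓ := hℓ

lemma aux_cycleWeight_split (α : ℕ → ℝ) {N₁ N₂ : ℕ} (e : (Fin N₁ ⊕ Fin N₂) ≃ Fin (N₁ + N₂))
    (π₁ : Equiv.Perm (Fin N₁)) (π₂ : Equiv.Perm (Fin N₂)) :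
    cycleWeight α (e.permCongr (Equiv.Perm.sumCongr π₁ π₂))
      = cycleWeight α π₁ + cycleWeight α π₂ := by
  unfold cycleWeight
  have h1 : ∀ ℓ ∈ Finset.Icc 1 (N₁ + N₂),
      α ℓ * (numCycles (e.permCongr (Equiv.Perm.sumCongr π₁ π₂)) ℓ : ℝ)
        = α ℓ * (numCycles π₁ ℓ : ℝ) + α ℓ * (numCycles π₂ ℓ : ℝ) := by
    intro ℓ hℓ
    rw [Finset.mem_Icc] at hℓ
    rw [aux_numCycles_split e π₁ π₂ ℓ hℓ.1]
    push_cast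
    ring
  rw [Finset.sum_congr rfl h1, Finset.sum_add_distrib]
  congr 1
  · refine (Finset.sum_subset (Finset.Icc_subset_Icc_right (Nat.le_add_right _ _)) ?_).symm
    intro ℓ hℓ hℓ'
    rw [Finset.mem_Icc] at hℓ hℓ'
    rw [aux_numCycles_zero π₁ ℓ (by omega)]
    simp
  · refine (Finset.sum_subset (Finset.Icc_subset_Icc_right (Nat.le_add_left _ _)) ?_).symm
    intro ℓ hℓ hℓ'
    rw [Finset.mem_Icc] at hℓ hℓ'
    rw [aux_numCycles_zero π₂ ℓ (by omega)]
    simp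

lemma aux_prod_meas (d : ℕ) {φ : (Fin d → ℝ) → ℝ} (hφmeas : Measurable φ)
    {n : ℕ} (σ : Equiv.Perm (Fin n)) :
    Measurable (fun x : Fin n → Fin d → ℝ => ∏ i, ENNReal.ofReal (φ (x i - x (σ i)))) :=
  Finset.measurable_prod _ fun i _ =>
    ENNReal.measurable_ofReal.comp (hφmeas.comp
      ((measurable_pi_apply i).sub (measurable_pi_apply (σ i))))

lemma aux_integral_split (d : ℕ) (φ : (Fin d → ℝ) → ℝ) (hφmeas : Measurable φ)
    (Λ₁ Λ₂ : Set (Fin d → ℝ)) (h₁ : MeasurableSet Λ₁) (h₂ : MeasurableSet Λ₂)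
    {N₁ N₂ : ℕ} (e : (Fin N₁ ⊕ Fin N₂) ≃ Fin (N₁ + N₂))
    (π₁ : Equiv.Perm (Fin N₁)) (π₂ : Equiv.Perm (Fin N₂)) :
    (∫⁻ x : Fin (N₁+N₂) → Fin d → ℝ in
        Set.univ.pi (fun i => Sum.elim (fun _ => Λ₁) (fun _ => Λ₂) (e.symm i)),
        ∏ i, ENNReal.ofReal (φ (x i - x ((e.permCongr (Equiv.Perm.sumCongr π₁ π₂)) i)))
        ∂volume)
    = (∫⁻ x : Fin N₁ → Fin d → ℝ in Set.univ.pi (fun _ => Λ₁),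
        ∏ i, ENNReal.ofReal (φ (x i - x (π₁ i))) ∂volume)
      * ∫⁻ x : Fin N₂ → Fin d → ℝ in Set.univ.pi (fun _ => Λ₂),
        ∏ i, ENNReal.ofReal (φ (x i - x (π₂ i))) ∂volume := by
  classical
  set g := MeasurableEquiv.piCongrLeft (fun _ : Fin (N₁+N₂) => (Fin d → ℝ)) e with hg
  have MP : MeasurePreserving g volume volume :=
    MeasureTheory.volume_measurePreserving_piCongrLeft _ e
  have hT : MeasurableSet (Set.univ.pi
      (fun i : Fin (N₁+N₂) => Sum.elim (fun _ => Λ₁) (fun _ => Λ₂) (e.symm i))) := by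
    refine MeasurableSet.univ_pi fun i => ?_
    rcases e.symm i with a | b
    · exact h₁
    · exact h₂
  rw [← MP.setLIntegral_comp_preimage hT (aux_prod_meas d hφmeas _)]
  have hgapp : ∀ (y : (Fin N₁ ⊕ Fin N₂) → (Fin d → ℝ)) (j : Fin N₁ ⊕ Fin N₂),
      g y (e j) = y j := by
    intro y j
    exact Equiv.piCongrLeft_apply_apply (P := fun _ => (Fin d → ℝ)) e y j
  have hpre : g ⁻¹' (Set.univ.pi
      (fun i : Fin (N₁+N₂) => Sum.elim (fun _ => Λ₁) (fun _ => Λ₂) (e.symm i)))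
      = Set.univ.pi (fun j : Fin N₁ ⊕ Fin N₂ => Sum.elim (fun _ => Λ₁) (fun _ => Λ₂) j) := by
    ext y
    simp only [Set.mem_preimage, Set.mem_pi, Set.mem_univ, forall_true_left, true_implies]
    constructor
    · intro h j
      have := h (e j)
      rwa [hgapp, Equiv.symm_apply_apply] at this
    · intro h i
      have h2 : g y (e (e.symm i)) = y (e.symm i) := hgapp y (e.symm i)
      rw [Equiv.apply_symm_apply] at h2
      rw [h2]
      exact h (e.symm i)
  have hint : ∀ y : (Fin N₁ ⊕ Fin N₂) → (Fin d → ℝ),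
      (∏ i, ENNReal.ofReal (φ (g y i - g y ((e.permCongr (Equiv.Perm.sumCongr π₁ π₂)) i))))
      = ∏ j, ENNReal.ofReal (φ (y j - y ((Equiv.Perm.sumCongr π₁ π₂) j))) := by
    intro y
    rw [← Equiv.prod_comp e
      (fun i => ENNReal.ofReal (φ (g y i - g y ((e.permCongr (Equiv.Perm.sumCongr π₁ π₂)) i))))]
    refine Finset.prod_congr rfl fun j _ => ?_
    have h1 : (e.permCongr (Equiv.Perm.sumCongr π₁ π₂)) (e j)
        = e ((Equiv.Perm.sumCongr π₁ π₂) j) := by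
      simp [Equiv.permCongr_apply]
    rw [h1, hgapp, hgapp]
  rw [hpre]
  simp_rw [hint]
  -- step 2
  set h := MeasurableEquiv.sumPiEquivProdPi (fun _ : Fin N₁ ⊕ Fin N₂ => (Fin d → ℝ)) with hh
  have MP2 : MeasurePreserving h.symm volume volume :=
    MeasureTheory.volume_measurePreserving_sumPiEquivProdPi_symm _
  have hU : MeasurableSet (Set.univ.pi
      (fun j : Fin N₁ ⊕ Fin N₂ => Sum.elim (fun _ => Λ₁) (fun _ => Λ₂) j)) := by
    refine MeasurableSet.univ_pi fun j => ?_
    rcases j with a | b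
    · exact h₁
    · exact h₂
  have hmeas2 : Measurable (fun y : (Fin N₁ ⊕ Fin N₂) → (Fin d → ℝ) =>
      ∏ j, ENNReal.ofReal (φ (y j - y ((Equiv.Perm.sumCongr π₁ π₂) j)))) :=
    Finset.measurable_prod _ fun j _ =>
      ENNReal.measurable_ofReal.comp (hφmeas.comp
        ((measurable_pi_apply j).sub (measurable_pi_apply _)))
  rw [← MP2.setLIntegral_comp_preimage hU hmeas2]
  have hpre2 : h.symm ⁻¹' (Set.univ.pi
      (fun j : Fin N₁ ⊕ Fin N₂ => Sum.elim (fun _ => Λ₁) (fun _ => Λ₂) j))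
      = (Set.univ.pi fun _ : Fin N₁ => Λ₁) ×ˢ (Set.univ.pi fun _ : Fin N₂ => Λ₂) := by
    rw [MeasurableEquiv.coe_sumPiEquivProdPi_symm]
    exact Equiv.sumPiEquivProdPi_symm_preimage_univ_pi _ _
  have hint2 : ∀ z : (Fin N₁ → Fin d → ℝ) × (Fin N₂ → Fin d → ℝ),
      (∏ j, ENNReal.ofReal (φ (h.symm z j - h.symm z ((Equiv.Perm.sumCongr π₁ π₂) j))))
      = (∏ a, ENNReal.ofReal (φ (z.1 a - z.1 (π₁ a))))
        * ∏ b, ENNReal.ofReal (φ (z.2 b - z.2 (π₂ b))) := by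
    intro z
    rw [Fintype.prod_sum_type]
    rfl
  rw [hpre2]
  simp_rw [hint2]
  rw [MeasureTheory.Measure.volume_eq_prod, ← MeasureTheory.Measure.prod_restrict]
  exact MeasureTheory.lintegral_prod_mul
    ((aux_prod_meas d hφmeas π₁).aemeasurable) ((aux_prod_meas d hφmeas π₂).aemeasurable)


set_option maxHeartbeats 1000000 in
/-- Subadditivity of the free energy: for disjoint open bounded `Λ₁, Λ₂` and any `N₁, N₂`,
`Y(Λ₁ ∪ Λ₂, N₁+N₂) ≥ Y(Λ₁,N₁) Y(Λ₂,N₂)`, i.e. `F = -log Y` is subadditive. -/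
theorem stmt11 (d : ℕ) (φ : (Fin d → ℝ) → ℝ) (α : ℕ → ℝ)
    (hφmeas : Measurable φ) (hφnn : ∀ x, 0 ≤ φ x)
    (hφ1 : ∫⁻ x : Fin d → ℝ, ENNReal.ofReal (φ x) ∂volume = 1)
    (Λ₁ Λ₂ : Set (Fin d → ℝ))
    (h₁o : IsOpen Λ₁) (h₂o : IsOpen Λ₂)
    (h₁b : Bornology.IsBounded Λ₁) (h₂b : Bornology.IsBounded Λ₂)
    (hdisj : Disjoint Λ₁ Λ₂) (N₁ N₂ : ℕ) :
    YE d φ α Λ₁ N₁ * YE d φ α Λ₂ N₂ ≤ YE d φ α (Λ₁ ∪ Λ₂) (N₁ + N₂) := by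
  classical
  have h₁m := h₁o.measurableSet
  have h₂m := h₂o.measurableSet
  set P : Finset (Finset (Fin (N₁+N₂))) := Finset.powersetCard N₁ Finset.univ with hP
  set A : Finset (Fin (N₁+N₂)) → Set (Fin (N₁+N₂) → Fin d → ℝ) :=
    fun S => Set.univ.pi (fun i => if i ∈ S then Λ₁ else Λ₂) with hAdef
  -- abbreviations
  set SS1 : ℝ≥0∞ := ∑ π : Equiv.Perm (Fin N₁),
    (∫⁻ x : Fin N₁ → Fin d → ℝ in Set.univ.pi (fun _ => Λ₁),
        ∏ i, ENNReal.ofReal (φ (x i - x (π i))) ∂volume) *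
      ENNReal.ofReal (Real.exp (-(cycleWeight α π))) with hS1
  set SS2 : ℝ≥0∞ := ∑ π : Equiv.Perm (Fin N₂),
    (∫⁻ x : Fin N₂ → Fin d → ℝ in Set.univ.pi (fun _ => Λ₂),
        ∏ i, ENNReal.ofReal (φ (x i - x (π i))) ∂volume) *
      ENNReal.ofReal (Real.exp (-(cycleWeight α π))) with hS2
  have hAmeas : ∀ S, MeasurableSet (A S) := by
    intro S
    refine MeasurableSet.univ_pi fun i => ?_
    by_cases h : i ∈ S <;> simp [hAdef, h, h₁m, h₂m]
  have hAsub : ∀ S, A S ⊆ Set.univ.pi (fun _ : Fin (N₁+N₂) => Λ₁ ∪ Λ₂) := by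
    intro S x hx i _
    have hxi : x i ∈ (if i ∈ S then Λ₁ else Λ₂) := hx i (Set.mem_univ i)
    by_cases h : i ∈ S
    · rw [if_pos h] at hxi; exact Or.inl hxi
    · rw [if_neg h] at hxi; exact Or.inr hxi
  have hAdisj : (↑P : Set (Finset (Fin (N₁+N₂)))).PairwiseDisjoint A := by
    intro S hS S' hS' hne
    rw [Finset.mem_coe, hP, Finset.mem_powersetCard_univ] at hS hS'
    have hnsub : ¬ S ⊆ S' := fun hsub =>
      hne (Finset.eq_of_subset_of_card_le hsub (by rw [hS, hS']))
    obtain ⟨i, hiS, hiS'⟩ := Finset.not_subset.1 hnsub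
    refine Set.disjoint_left.2 fun x hx hx' => ?_
    have hx1 : x i ∈ (if i ∈ S then Λ₁ else Λ₂) := hx i (Set.mem_univ i)
    have hx2 : x i ∈ (if i ∈ S' then Λ₁ else Λ₂) := hx' i (Set.mem_univ i)
    rw [if_pos hiS] at hx1
    rw [if_neg hiS'] at hx2
    exact Set.disjoint_left.1 hdisj hx1 hx2
  have hstepA : ∀ π : Equiv.Perm (Fin (N₁+N₂)),
      (∑ S ∈ P, ∫⁻ x in A S, ∏ i, ENNReal.ofReal (φ (x i - x (π i))) ∂volume)
      ≤ ∫⁻ x in Set.univ.pi (fun _ : Fin (N₁+N₂) => Λ₁ ∪ Λ₂),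
          ∏ i, ENNReal.ofReal (φ (x i - x (π i))) ∂volume := by
    intro π
    rw [← MeasureTheory.lintegral_biUnion_finset hAdisj (fun S _ => hAmeas S)]
    exact MeasureTheory.lintegral_mono_set (Set.iUnion₂_subset fun S _ => hAsub S)
  have main : ∀ S ∈ P, SS1 * SS2
      ≤ ∑ π : Equiv.Perm (Fin (N₁+N₂)),
          (∫⁻ x in A S, ∏ i, ENNReal.ofReal (φ (x i - x (π i))) ∂volume) *
            ENNReal.ofReal (Real.exp (-(cycleWeight α π))) := by
    intro S hSP
    rw [hP, Finset.mem_powersetCard_univ] at hSP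
    have hSc : Sᶜ.card = N₂ := by
      rw [Finset.card_compl, hSP, Fintype.card_fin]; omega
    set eS : (Fin N₁ ⊕ Fin N₂) ≃ Fin (N₁+N₂) :=
      (Equiv.sumCongr (S.orderIsoOfFin hSP).toEquiv
        ((Sᶜ.orderIsoOfFin hSc).toEquiv.trans
          (Equiv.subtypeEquivRight (fun x => Finset.mem_compl)))).trans
        (Equiv.sumCompl (· ∈ S)) with heS
    have heS1 : ∀ a, eS (Sum.inl a) ∈ S := fun a => by
      simp only [heS, Equiv.trans_apply, Equiv.sumCongr_apply, Sum.map_inl,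
        Equiv.sumCompl_apply_inl]
      exact ((S.orderIsoOfFin hSP).toEquiv a).2
    have heS2 : ∀ b, eS (Sum.inr b) ∉ S := fun b => by
      simp only [heS, Equiv.trans_apply, Equiv.sumCongr_apply, Sum.map_inr,
        Equiv.sumCompl_apply_inr]
      exact (Equiv.subtypeEquivRight (fun x => Finset.mem_compl)
        ((Sᶜ.orderIsoOfFin hSc).toEquiv b)).2
    have hAeq : A S = Set.univ.pi
        (fun i => Sum.elim (fun _ => Λ₁) (fun _ => Λ₂) (eS.symm i)) := by
      rw [hAdef]
      refine congrArg Set.univ.pi (funext fun i => ?_)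
      rcases h : eS.symm i with a | b
      · have hi : i = eS (Sum.inl a) := by rw [← h, Equiv.apply_symm_apply]
        rw [Sum.elim_inl, if_pos (show i ∈ S by rw [hi]; exact heS1 a)]
      · have hi : i = eS (Sum.inr b) := by rw [← h, Equiv.apply_symm_apply]
        rw [Sum.elim_inr, if_neg (show ¬ i ∈ S by rw [hi]; exact heS2 b)]
    have hinj : ∀ x ∈ (Finset.univ : Finset (Equiv.Perm (Fin N₁) × Equiv.Perm (Fin N₂))),
        ∀ y ∈ (Finset.univ : Finset (Equiv.Perm (Fin N₁) × Equiv.Perm (Fin N₂))),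
        eS.permCongr (Equiv.Perm.sumCongr x.1 x.2) = eS.permCongr (Equiv.Perm.sumCongr y.1 y.2)
          → x = y := by
      intro x _ y _ h
      have h' : Equiv.Perm.sumCongr x.1 x.2 = Equiv.Perm.sumCongr y.1 y.2 :=
        (Equiv.permCongr eS).injective h
      have h1 : x.1 = y.1 := Equiv.ext fun a => by
        have hc := congrArg (fun σ : Equiv.Perm (Fin N₁ ⊕ Fin N₂) => σ (Sum.inl a)) h'
        have hc' : (Sum.inl (x.1 a) : Fin N₁ ⊕ Fin N₂) = Sum.inl (y.1 a) := by
          simpa using hc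
        exact Sum.inl_injective hc'
      have h2 : x.2 = y.2 := Equiv.ext fun b => by
        have hc := congrArg (fun σ : Equiv.Perm (Fin N₁ ⊕ Fin N₂) => σ (Sum.inr b)) h'
        have hc' : (Sum.inr (x.2 b) : Fin N₁ ⊕ Fin N₂) = Sum.inr (y.2 b) := by
          simpa using hc
        exact Sum.inr_injective hc'
      exact Prod.ext h1 h2
    calc SS1 * SS2
        = ∑ p : Equiv.Perm (Fin N₁) × Equiv.Perm (Fin N₂),
            (∫⁻ x in A S, ∏ i, ENNReal.ofReal
              (φ (x i - x ((eS.permCongr (Equiv.Perm.sumCongr p.1 p.2)) i))) ∂volume) *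
            ENNReal.ofReal (Real.exp (-(cycleWeight α
              (eS.permCongr (Equiv.Perm.sumCongr p.1 p.2))))) := by
          rw [hS1, hS2, Finset.sum_mul_sum, Fintype.sum_prod_type]
          refine Finset.sum_congr rfl fun π₁ _ => Finset.sum_congr rfl fun π₂ _ => ?_
          rw [hAeq, aux_integral_split d φ hφmeas Λ₁ Λ₂ h₁m h₂m eS π₁ π₂,
            aux_cycleWeight_split α eS π₁ π₂, neg_add, Real.exp_add,
            ENNReal.ofReal_mul (Real.exp_nonneg _)]
          ring
      _ = ∑ π ∈ Finset.image
            (fun p : Equiv.Perm (Fin N₁) × Equiv.Perm (Fin N₂) =>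
              eS.permCongr (Equiv.Perm.sumCongr p.1 p.2)) Finset.univ,
            (∫⁻ x in A S, ∏ i, ENNReal.ofReal (φ (x i - x (π i))) ∂volume) *
            ENNReal.ofReal (Real.exp (-(cycleWeight α π))) :=
          (Finset.sum_image (f := fun π : Equiv.Perm (Fin (N₁+N₂)) =>
            (∫⁻ x in A S, ∏ i, ENNReal.ofReal (φ (x i - x (π i))) ∂volume) *
              ENNReal.ofReal (Real.exp (-(cycleWeight α π)))) hinj).symm
      _ ≤ _ := Finset.sum_le_sum_of_subset (Finset.subset_univ _)
  -- counting
  have hsum : (((N₁+N₂).choose N₁ : ℕ) : ℝ≥0∞) * (SS1 * SS2)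
      ≤ ∑ π : Equiv.Perm (Fin (N₁+N₂)),
          (∫⁻ x in Set.univ.pi (fun _ : Fin (N₁+N₂) => Λ₁ ∪ Λ₂),
            ∏ i, ENNReal.ofReal (φ (x i - x (π i))) ∂volume) *
          ENNReal.ofReal (Real.exp (-(cycleWeight α π))) := by
    calc (((N₁+N₂).choose N₁ : ℕ) : ℝ≥0∞) * (SS1 * SS2)
        = ∑ _S ∈ P, SS1 * SS2 := by
          rw [Finset.sum_const, hP, Finset.card_powersetCard, Finset.card_univ,
            Fintype.card_fin, nsmul_eq_mul]
      _ ≤ ∑ S ∈ P, ∑ π : Equiv.Perm (Fin (N₁+N₂)),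
            (∫⁻ x in A S, ∏ i, ENNReal.ofReal (φ (x i - x (π i))) ∂volume) *
            ENNReal.ofReal (Real.exp (-(cycleWeight α π))) := Finset.sum_le_sum main
      _ = ∑ π : Equiv.Perm (Fin (N₁+N₂)),
            (∑ S ∈ P, ∫⁻ x in A S, ∏ i, ENNReal.ofReal (φ (x i - x (π i))) ∂volume) *
            ENNReal.ofReal (Real.exp (-(cycleWeight α π))) := by
          rw [Finset.sum_comm]
          exact Finset.sum_congr rfl fun π _ => (Finset.sum_mul _ _ _).symm
      _ ≤ _ := Finset.sum_le_sum fun π _ => mul_le_mul_left (hstepA π) _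
  -- final arithmetic
  have hC0 : (((N₁+N₂).choose N₁ : ℕ) : ℝ≥0∞) ≠ 0 :=
    Nat.cast_ne_zero.2 (Nat.choose_pos (Nat.le_add_right N₁ N₂)).ne'
  have hfact : (N₁+N₂).choose N₁ * N₁.factorial * N₂.factorial = (N₁+N₂).factorial := by
    have h := Nat.choose_mul_factorial_mul_factorial (Nat.le_add_right N₁ N₂)
    simpa [Nat.add_sub_cancel_left] using h
  have key : ((N₁.factorial : ℝ≥0∞))⁻¹ * ((N₂.factorial : ℝ≥0∞))⁻¹
      = (((N₁+N₂).factorial : ℝ≥0∞))⁻¹ * (((N₁+N₂).choose N₁ : ℕ) : ℝ≥0∞) := by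
    have h1 : ((N₁+N₂).factorial : ℝ≥0∞)
        = (((N₁+N₂).choose N₁ : ℕ) : ℝ≥0∞) * (N₁.factorial : ℝ≥0∞) * (N₂.factorial : ℝ≥0∞) := by
      exact_mod_cast congrArg (fun n : ℕ => (n : ℝ≥0∞)) hfact.symm
    rw [h1, ENNReal.mul_inv (Or.inr (ENNReal.natCast_ne_top _))
        (Or.inr (Nat.cast_ne_zero.2 (Nat.factorial_pos N₂).ne')),
      ENNReal.mul_inv (Or.inr (ENNReal.natCast_ne_top _))
        (Or.inr (Nat.cast_ne_zero.2 (Nat.factorial_pos N₁).ne'))]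
    have h2 : (((N₁+N₂).choose N₁ : ℕ) : ℝ≥0∞)⁻¹ * (N₁.factorial : ℝ≥0∞)⁻¹ *
        (N₂.factorial : ℝ≥0∞)⁻¹ * (((N₁+N₂).choose N₁ : ℕ) : ℝ≥0∞)
        = ((((N₁+N₂).choose N₁ : ℕ) : ℝ≥0∞) * (((N₁+N₂).choose N₁ : ℕ) : ℝ≥0∞)⁻¹) *
          ((N₁.factorial : ℝ≥0∞)⁻¹ * (N₂.factorial : ℝ≥0∞)⁻¹) := by ring
    rw [h2, ENNReal.mul_inv_cancel hC0 (ENNReal.natCast_ne_top _), one_mul]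
  calc YE d φ α Λ₁ N₁ * YE d φ α Λ₂ N₂
      = ((N₁.factorial : ℝ≥0∞)⁻¹ * (N₂.factorial : ℝ≥0∞)⁻¹) * (SS1 * SS2) := by
        rw [YE, YE, ← hS1, ← hS2]; ring
    _ = ((N₁+N₂).factorial : ℝ≥0∞)⁻¹ * ((((N₁+N₂).choose N₁ : ℕ) : ℝ≥0∞) * (SS1 * SS2)) := by
        rw [key]; ring
    _ ≤ ((N₁+N₂).factorial : ℝ≥0∞)⁻¹ * ∑ π : Equiv.Perm (Fin (N₁+N₂)),
          (∫⁻ x in Set.univ.pi (fun _ : Fin (N₁+N₂) => Λ₁ ∪ Λ₂),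
            ∏ i, ENNReal.ofReal (φ (x i - x (π i))) ∂volume) *
          ENNReal.ofReal (Real.exp (-(cycleWeight α π))) := mul_le_mul_right hsum _
    _ = YE d φ α (Λ₁ ∪ Λ₂) (N₁ + N₂) := rfl

end AuxStmt11
end
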